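/- Fix K ≥ 1, W > 0, weights w_1, …, w_K > 0 with w_0 = 0, normalized noise powers η_0 ≥ η_1 ≥ … ≥ η_K > 0, M ≥ 1, P_max > 0, and a budget 0 < P̄ ≤ P_max. With f_l(x) = W·(w_l·log₂(x + η_l) − w_{l−1}·log₂(x + η_{l−1})) and x_{K+1} = 0, let y = (y_1, …, y_K) maximize Σ_{l=1}^{K} f_l(x_l) over {P̄ ≥ x_1 ≥ … ≥ x_K ≥ 0, |{l : x_l > x_{l+1}}| ≤ M}, and let i be the largest index with y_1 = y_2 = … = y_i. Then y_1 = … = y_i = P̄, and the vector x defined by x_l = P_max for l ≤ i and x_l = y_l for l > i maximizes Σ_{l=1}^{K} f_l(x_l) over {P_max ≥ x_1 ≥ … ≥ x_K ≥ 0, |{l : x_l > x_{l+1}}| ≤ M, x_1 = x_2 = … = x_i}; consequently y_l = min{x_l, P̄} for every l. -/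

import Mathlib

/-- `f_{q,q'}(y) = W·(w_{q'}·log₂(y + η_{q'}) − w_{q−1}·log₂(y + η_{q−1}))`. -/
noncomputable def fqq (W : ℝ) (w η : ℕ → ℝ) (q q' : ℕ) (y : ℝ) : ℝ :=
  W * (w q' * Real.logb 2 (y + η q') - w (q - 1) * Real.logb 2 (y + η (q - 1)))

/-- The chain set `C(P) = {x : P ≥ x 1 ≥ … ≥ x K ≥ 0}` (only coordinates `1, …, K` matter). -/
def chainSet (K : ℕ) (P : ℝ) : Set (ℕ → ℝ) :=
  {x | x 1 ≤ P ∧ (∀ l, 1 ≤ l → l < K → x (l + 1) ≤ x l) ∧ 0 ≤ x K}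

/-- The single-carrier objective `∑_{l=1}^{K} f_l(x_l)` with `f_l = f_{l,l}`. -/
noncomputable def objSC (K : ℕ) (W : ℝ) (w η : ℕ → ℝ) (x : ℕ → ℝ) : ℝ :=
  ∑ l ∈ Finset.Icc 1 K, fqq W w η l l (x l)

/-- Number of active users `|{l : x_l > x_{l+1}}|`, with the convention `x_{K+1} = 0`. -/
noncomputable def activeCount (K : ℕ) (x : ℕ → ℝ) : ℕ :=
  {l : ℕ | 1 ≤ l ∧ l ≤ K ∧ (if l = K then 0 else x (l + 1)) < x l}.ncard

/-- SIC-constrained feasible set: chain constraints plus at most `M` active users. -/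
def sicSet (K M : ℕ) (P : ℝ) : Set (ℕ → ℝ) :=
  {x | x ∈ chainSet K P ∧ activeCount K x ≤ M}

/- ---------------- Auxiliary lemmas ---------------- -/

lemma key_le (u v α β a b : ℝ) (hα : 0 < α) (hβ : 0 < β) (h0 : 0 ≤ a) (hab : a ≤ b)
    (h : ∀ t, a ≤ t → t ≤ b → v * (t + α) ≤ u * (t + β)) :
    v * (Real.log (b + β) - Real.log (a + β)) ≤ u * (Real.log (b + α) - Real.log (a + α)) := by
  set g : ℝ → ℝ := fun t => u * Real.log (t + α) - v * Real.log (t + β) with hg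
  have hd : ∀ t ∈ Set.Icc a b, HasDerivAt g (u / (t + α) - v / (t + β)) t := by
    intro t ht
    have htα : t + α ≠ 0 := by nlinarith [ht.1]
    have htβ : t + β ≠ 0 := by nlinarith [ht.1]
    have h1 : HasDerivAt (fun t : ℝ => t + α) 1 t := (hasDerivAt_id t).add_const α
    have h2 : HasDerivAt (fun t : ℝ => t + β) 1 t := (hasDerivAt_id t).add_const β
    have h1' := (h1.log htα).const_mul u
    have h2' := (h2.log htβ).const_mul v
    simpa [hg, one_div, div_eq_mul_inv, Pi.sub_def] using h1'.sub h2'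
  have hmono : MonotoneOn g (Set.Icc a b) := by
    apply monotoneOn_of_deriv_nonneg (convex_Icc a b)
    · exact fun t ht => ((hd t ht).continuousAt).continuousWithinAt
    · intro t ht
      rw [interior_Icc] at ht
      exact ((hd t (Set.mem_Icc_of_Ioo ht)).differentiableAt).differentiableWithinAt
    · intro t ht
      rw [interior_Icc] at ht
      have ht' : t ∈ Set.Icc a b := Set.mem_Icc_of_Ioo ht
      rw [(hd t ht').deriv]
      have h1 : 0 < t + α := by nlinarith [ht'.1]
      have h2 : 0 < t + β := by nlinarith [ht'.1]
      rw [sub_nonneg, div_le_div_iff₀ h2 h1]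
      exact h t ht'.1 ht'.2
  have := hmono (Set.left_mem_Icc.2 hab) (Set.right_mem_Icc.2 hab) hab
  simp only [hg] at this
  linarith

lemma key_lt (u v α β a b : ℝ) (hα : 0 < α) (hβ : 0 < β) (h0 : 0 ≤ a) (hab : a < b)
    (h : ∀ t, a < t → t ≤ b → v * (t + α) < u * (t + β)) :
    v * (Real.log (b + β) - Real.log (a + β)) < u * (Real.log (b + α) - Real.log (a + α)) := by
  set g : ℝ → ℝ := fun t => u * Real.log (t + α) - v * Real.log (t + β) with hg
  have hd : ∀ t ∈ Set.Icc a b, HasDerivAt g (u / (t + α) - v / (t + β)) t := by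
    intro t ht
    have htα : t + α ≠ 0 := by nlinarith [ht.1]
    have htβ : t + β ≠ 0 := by nlinarith [ht.1]
    have h1 : HasDerivAt (fun t : ℝ => t + α) 1 t := (hasDerivAt_id t).add_const α
    have h2 : HasDerivAt (fun t : ℝ => t + β) 1 t := (hasDerivAt_id t).add_const β
    have h1' := (h1.log htα).const_mul u
    have h2' := (h2.log htβ).const_mul v
    simpa [hg, one_div, div_eq_mul_inv, Pi.sub_def] using h1'.sub h2'
  have hmono : StrictMonoOn g (Set.Icc a b) := by
    apply strictMonoOn_of_deriv_pos (convex_Icc a b)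
    · exact fun t ht => ((hd t ht).continuousAt).continuousWithinAt
    · intro t ht
      rw [interior_Icc] at ht
      have ht' : t ∈ Set.Icc a b := Set.mem_Icc_of_Ioo ht
      rw [(hd t ht').deriv]
      have h1 : 0 < t + α := by nlinarith [ht'.1]
      have h2 : 0 < t + β := by nlinarith [ht'.1]
      rw [sub_pos, div_lt_div_iff₀ h2 h1]
      exact h t ht.1 (le_of_lt ht.2)
  have := hmono (Set.left_mem_Icc.2 hab.le) (Set.right_mem_Icc.2 hab.le) hab
  simp only [hg] at this
  linarith

lemma key_le' (u v α β a b : ℝ) (hα : 0 < α) (hβ : 0 < β) (h0 : 0 ≤ a) (hab : a ≤ b)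
    (h : ∀ t, a ≤ t → t ≤ b → v * (t + α) ≤ u * (t + β)) :
    v * (Real.logb 2 (b + β) - Real.logb 2 (a + β))
      ≤ u * (Real.logb 2 (b + α) - Real.logb 2 (a + α)) := by
  have h2 : (0:ℝ) < Real.log 2 := Real.log_pos (by norm_num)
  have := key_le u v α β a b hα hβ h0 hab h
  simp only [Real.logb, ← sub_div, ← mul_div_assoc]
  rw [div_le_div_iff_of_pos_right h2]
  exact this

lemma key_lt' (u v α β a b : ℝ) (hα : 0 < α) (hβ : 0 < β) (h0 : 0 ≤ a) (hab : a < b)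
    (h : ∀ t, a < t → t ≤ b → v * (t + α) < u * (t + β)) :
    v * (Real.logb 2 (b + β) - Real.logb 2 (a + β))
      < u * (Real.logb 2 (b + α) - Real.logb 2 (a + α)) := by
  have h2 : (0:ℝ) < Real.log 2 := Real.log_pos (by norm_num)
  have := key_lt u v α β a b hα hβ h0 hab h
  simp only [Real.logb, ← sub_div, ← mul_div_assoc]
  rw [div_lt_div_iff_of_pos_right h2]
  exact this

lemma sum_fqq_Ioc (W : ℝ) (w η : ℕ → ℝ) (a : ℕ) (t : ℝ) : ∀ b, a ≤ b →
    ∑ l ∈ Finset.Ioc a b, fqq W w η l l t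
      = W * (w b * Real.logb 2 (t + η b) - w a * Real.logb 2 (t + η a)) := by
  intro b hb
  induction b, hb using Nat.le_induction with
  | base => simp
  | succ b hab ih =>
    rw [← Finset.Icc_add_one_left_eq_Ioc, Finset.sum_Icc_succ_top (by omega), Finset.Icc_add_one_left_eq_Ioc, ih]
    simp only [fqq, Nat.add_sub_cancel]
    ring

lemma active_finite (K : ℕ) (x : ℕ → ℝ) :
    {l : ℕ | 1 ≤ l ∧ l ≤ K ∧ (if l = K then 0 else x (l + 1)) < x l}.Finite :=
  Set.Finite.subset (Set.finite_Icc 1 K) (fun l hl => Set.mem_Icc.2 ⟨hl.1, hl.2.1⟩)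

lemma objSC_split (K n : ℕ) (hn : n ≤ K) (W : ℝ) (w η : ℕ → ℝ) (x : ℕ → ℝ) :
    objSC K W w η x = ∑ l ∈ Finset.Ioc 0 n, fqq W w η l l (x l)
      + ∑ l ∈ Finset.Ioc n K, fqq W w η l l (x l) := by
  rw [objSC, show Finset.Icc 1 K = Finset.Ioc 0 K from Finset.Icc_add_one_left_eq_Ioc 0 K,
    ← Finset.sum_Ioc_consecutive _ (Nat.zero_le n) hn]

lemma chain_mono {K : ℕ} {P : ℝ} {x : ℕ → ℝ} (hx : x ∈ chainSet K P) :
    ∀ a b : ℕ, 1 ≤ a → a ≤ b → b ≤ K → x b ≤ x a := by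
  intro a b ha hab hbK
  induction b, hab using Nat.le_induction with
  | base => exact le_rfl
  | succ b hab ih =>
    exact le_trans (hx.2.1 b (le_trans ha hab) (by omega)) (ih (by omega))

lemma chain_nonneg {K : ℕ} {P : ℝ} {x : ℕ → ℝ} (hx : x ∈ chainSet K P) :
    ∀ l, 1 ≤ l → l ≤ K → 0 ≤ x l :=
  fun l h1 h2 => le_trans hx.2.2 (chain_mono hx l K h1 h2 le_rfl)

lemma chain_leP {K : ℕ} {P : ℝ} {x : ℕ → ℝ} (hx : x ∈ chainSet K P) :
    ∀ l, 1 ≤ l → l ≤ K → x l ≤ P :=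
  fun l h1 h2 => le_trans (chain_mono hx 1 l le_rfl h1 h2) hx.1

set_option maxHeartbeats 1000000 in
/-- **Truncation property underlying i-SCUS.** Let `y` maximize `∑_l f_l` over the
SIC-constrained set with budget `P ≤ P_max`, and let `i` be the largest index with
`y_1 = … = y_i`. Then `y_1 = … = y_i = P`; the vector `x` equal to `P_max` on indices
`≤ i` and to `y` elsewhere maximizes `∑_l f_l` over the SIC-constrained set with budget
`P_max` restricted to `x_1 = … = x_i`; and `y_l = min (x_l) P` for every `l`. -/
theorem stmt_9
    (K M : ℕ) (hK : 1 ≤ K) (hM : 1 ≤ M) (W : ℝ) (hW : 0 < W)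
    (w η : ℕ → ℝ) (hw0 : w 0 = 0)
    (hw : ∀ l, 1 ≤ l → l ≤ K → 0 < w l)
    (hη_pos : ∀ l, l ≤ K → 0 < η l)
    (hη_mono : ∀ l, l < K → η (l + 1) ≤ η l)
    (Pmax P : ℝ) (hPmax : 0 < Pmax) (hP : 0 < P) (hPle : P ≤ Pmax)
    (y : ℕ → ℝ) (hy : y ∈ sicSet K M P)
    (hymax : ∀ z ∈ sicSet K M P, objSC K W w η z ≤ objSC K W w η y)
    (i : ℕ) (hi1 : 1 ≤ i) (hiK : i ≤ K)
    (hconst : ∀ l, 1 ≤ l → l ≤ i → y l = y 1)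
    (hlargest : i < K → y (i + 1) ≠ y 1) :
    (∀ l, 1 ≤ l → l ≤ i → y l = P) ∧
    ((fun l => if l ≤ i then Pmax else y l) ∈
        {z : ℕ → ℝ | z ∈ sicSet K M Pmax ∧ ∀ l, 1 ≤ l → l ≤ i → z l = z 1} ∧
      ∀ z ∈ {z : ℕ → ℝ | z ∈ sicSet K M Pmax ∧ ∀ l, 1 ≤ l → l ≤ i → z l = z 1},
        objSC K W w η z ≤ objSC K W w η (fun l => if l ≤ i then Pmax else y l)) ∧
    (∀ l, 1 ≤ l → l ≤ K → y l = min (if l ≤ i then Pmax else y l) P) := by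
  classical
  obtain ⟨hyc, hyact⟩ := hy
  have hmono := chain_mono hyc
  have hy0 := chain_nonneg hyc
  have hyleP := chain_leP hyc
  have hychain := hyc.2.1
  have hyK := hyc.2.2
  have hy1 := hyc.1
  have hηm : ∀ a b : ℕ, a ≤ b → b ≤ K → η b ≤ η a := by
    intro a b hab hbK
    induction b, hab using Nat.le_induction with
    | base => exact le_rfl
    | succ b hab ih => exact le_trans (hη_mono b (by omega)) (ih (by omega))
  have hηi : 0 < η i := hη_pos i hiK
  have hwi : 0 < w i := hw i hi1 hiK
  have hyip : i < K → y (i + 1) < y i := by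
    intro h
    refine lt_of_le_of_ne (hychain i hi1 h) ?_
    rw [hconst i hi1 le_rfl]
    exact hlargest h
  -- feasibility of front-lifted competitors
  have hBfeas : ∀ n, i ≤ n → n ≤ K →
      (fun l => if l ≤ n then P else y l) ∈ sicSet K M P := by
    simp only [sicSet, chainSet, activeCount, Set.mem_setOf_eq] at hyact ⊢
    intro n hin hnK
    have h1n : 1 ≤ n := le_trans hi1 hin
    refine ⟨⟨?_, ?_, ?_⟩, ?_⟩
    · simp only [if_pos h1n]; exact le_rfl
    · intro l hl1 hlK
      by_cases h1 : l + 1 ≤ n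
      · simp only [if_pos h1, if_pos (by omega : l ≤ n)]; exact le_rfl
      · by_cases h2 : l ≤ n
        · simp only [if_neg h1, if_pos h2]
          exact hyleP (l + 1) (by omega) (by omega)
        · simp only [if_neg h1, if_neg h2]
          exact hychain l (by omega) hlK
    · by_cases h : K ≤ n
      · simp only [if_pos h]; exact hP.le
      · simp only [if_neg h]; exact hyK
    · by_cases hiKeq : i = K
      · have hnn : n = K := le_antisymm hnK (hiKeq ▸ hin)
        have hset : {l : ℕ | 1 ≤ l ∧ l ≤ K ∧ (if l = K then 0 else (fun l => if l ≤ n then P else y l) (l + 1)) < (fun l => if l ≤ n then P else y l) l} = {K} := by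
          ext l
          simp only [Set.mem_setOf_eq, Set.mem_singleton_iff]
          constructor
          · rintro ⟨a, b, c⟩
            by_contra hne
            rw [if_neg hne, if_pos (by omega : l + 1 ≤ n), if_pos (by omega : l ≤ n)] at c
            exact lt_irrefl _ c
          · intro hl
            refine ⟨by omega, by omega, ?_⟩
            rw [if_pos hl, if_pos (by omega : l ≤ n)]
            exact hP
        rw [hset, Set.ncard_singleton]
        exact hM
      · have hiK' : i < K := lt_of_le_of_ne hiK hiKeq
        have hiact : i ∈ {l : ℕ | 1 ≤ l ∧ l ≤ K ∧ (if l = K then 0 else y (l + 1)) < y l} :=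
          ⟨hi1, hiK, by rw [if_neg hiKeq]; exact hyip hiK'⟩
        have hforce : ∀ l, l ∈ {l : ℕ | 1 ≤ l ∧ l ≤ K ∧ (if l = K then 0 else (fun l => if l ≤ n then P else y l) (l + 1)) < (fun l => if l ≤ n then P else y l) l} → l ≤ n → l = n := by
          intro l ⟨a, b, c⟩ hln
          by_contra hne
          have h1 : l < n := lt_of_le_of_ne hln hne
          have hlK : l ≠ K := by omega
          try dsimp only at c
          rw [if_neg hlK, if_pos (by omega : l + 1 ≤ n), if_pos hln] at c
          exact lt_irrefl _ c
        refine le_trans (Set.ncard_le_ncard_of_injOn (fun l => if l ≤ n then i else l) ?_ ?_ (active_finite K y)) hyact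
        · intro l hl
          by_cases h2 : l ≤ n
          · simp only [if_pos h2]; exact hiact
          · obtain ⟨a, b, c⟩ := hl
            try dsimp only at c
            simp only [if_neg h2]
            refine ⟨by omega, b, ?_⟩
            by_cases hK' : l = K
            · rw [if_pos hK'] at c ⊢
              rwa [if_neg h2] at c
            · rw [if_neg hK'] at c ⊢
              rw [if_neg (by omega : ¬ (l + 1 ≤ n)), if_neg h2] at c
              exact c
        · intro a ha b hb hab
          dsimp only at hab
          by_cases ha' : a ≤ n <;> by_cases hb' : b ≤ n
          · rw [hforce a ha ha', hforce b hb hb']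
          · rw [if_pos ha', if_neg hb'] at hab
            omega
          · rw [if_neg ha', if_pos hb'] at hab
            omega
          · rwa [if_neg ha', if_neg hb'] at hab
  -- Claim 1 : y 1 = P
  have hyP : y 1 = P := by
    by_contra hne
    have hle := hymax _ (hBfeas i le_rfl hiK)
    have hy10 : 0 ≤ y 1 := hy0 1 le_rfl hK
    have hy1P : y 1 ≤ P := hy1
    have hlt : y 1 < P := lt_of_le_of_ne hy1P hne
    have h1 : objSC K W w η (fun l => if l ≤ i then P else y l)
        = W * (w i * Real.logb 2 (P + η i) - w 0 * Real.logb 2 (P + η 0))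
          + ∑ l ∈ Finset.Ioc i K, fqq W w η l l (y l) := by
      rw [objSC_split K i hiK]
      congr 1
      · rw [Finset.sum_congr rfl (fun l hl => by
          rw [if_pos (Finset.mem_Ioc.1 hl).2]),
          sum_fqq_Ioc W w η 0 P i (Nat.zero_le i)]
      · exact Finset.sum_congr rfl (fun l hl => by
          rw [if_neg (by have := (Finset.mem_Ioc.1 hl).1; omega)])
    have h2 : objSC K W w η y
        = W * (w i * Real.logb 2 (y 1 + η i) - w 0 * Real.logb 2 (y 1 + η 0))
          + ∑ l ∈ Finset.Ioc i K, fqq W w η l l (y l) := by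
      rw [objSC_split K i hiK]
      congr 1
      rw [Finset.sum_congr rfl (fun l hl => by
        have hm := Finset.mem_Ioc.1 hl
        rw [hconst l hm.1 hm.2]),
        sum_fqq_Ioc W w η 0 (y 1) i (Nat.zero_le i)]
    rw [h1, h2] at hle
    have hlog : Real.logb 2 (y 1 + η i) < Real.logb 2 (P + η i) :=
      Real.logb_lt_logb one_lt_two (by linarith) (by linarith)
    rw [hw0] at hle
    have hmul := mul_lt_mul_of_pos_left hlog (mul_pos hW hwi)
    ring_nf at hle hmul
    linarith [hle, hmul]
  have hyl : ∀ l, 1 ≤ l → l ≤ i → y l = P := fun l a b => (hconst l a b).trans hyP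
  have hyipP : i < K → y (i + 1) < P := by
    intro h
    have := hyip h
    rwa [hyl i hi1 le_rfl] at this
  have hBle : ∀ n, i ≤ n → n ≤ K →
      objSC K W w η (fun l => if l ≤ n then P else y l) ≤ objSC K W w η y :=
    fun n h1 h2 => hymax _ (hBfeas n h1 h2)
  -- Fact ★ : pointwise dominance of level i over deeper levels above P
  have hstar : ∀ n, n ≤ K → i ≤ n → ∀ t, P ≤ t → w n * (t + η i) ≤ w i * (t + η n) := by
    intro n
    induction n using Nat.strong_induction_on with
    | _ n IH =>
      intro hnK hin t ht
      rcases eq_or_lt_of_le hin with rfl | hlt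
      · exact le_rfl
      have hwi : 0 < w i := hw i hi1 hiK
      have hηi : 0 < η i := hη_pos i hiK
      by_contra hcon
      push_neg at hcon
      have hiK' : i < K := lt_of_lt_of_le hlt hnK
      have hηn : 0 < η n := hη_pos n hnK
      have hηin : η n ≤ η i := hηm i n hlt.le hnK
      have hwn : 0 < w n := hw n (by omega) hnK
      -- (A) strict dominance of level n over level i on (0, P]
      have hA : ∀ s, 0 < s → s ≤ P → w i * (s + η n) < w n * (s + η i) := by
        intro s hs hsP
        rcases le_or_gt (w i) (w n) with h | h
        · rcases eq_or_lt_of_le h with heq | hlt'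
          · rw [← heq] at hcon ⊢
            nlinarith
          · nlinarith
        · nlinarith
      -- (B) weak dominance of level n over intermediate levels on [0, P]
      have hB : ∀ l, i ≤ l → l < n → ∀ s, 0 ≤ s → s ≤ P → w l * (s + η n) ≤ w n * (s + η l) := by
        intro l hil hln s hs0 hsP
        have hlK : l ≤ K := by omega
        have hηl : 0 < η l := hη_pos l hlK
        have hηln : η n ≤ η l := hηm l n hln.le hnK
        have hwl : 0 < w l := hw l (by omega) hlK
        rcases le_or_gt (w l) (w n) with h | h
        · nlinarith
        · have hIH := IH l hln hlK hil P le_rfl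
          have hAP := hA P hP le_rfl
          have hPηi : 0 < P + η i := by linarith
          have hPηl : 0 < P + η l := by linarith
          have hPηn : 0 < P + η n := by linarith
          have hNP : w l * (P + η n) < w n * (P + η l) := by
            nlinarith [mul_le_mul_of_nonneg_right hIH hPηn.le,
              mul_lt_mul_of_pos_right hAP hPηl]
          nlinarith
      -- downward-induction lower bound on the flattening gain
      have hTb : ∀ k b, i ≤ b → b + 1 + k = n →
          W * (w n * (Real.logb 2 (P + η n) - Real.logb 2 (y (b + 1) + η n))
             - w b * (Real.logb 2 (P + η b) - Real.logb 2 (y (b + 1) + η b)))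
          ≤ ∑ l ∈ Finset.Ioc b n, (fqq W w η l l P - fqq W w η l l (y l)) := by
        intro k
        induction k with
        | zero =>
          intro b hib hbn
          have hIoc : Finset.Ioc b n = {n} := by
            ext x; simp only [Finset.mem_Ioc, Finset.mem_singleton]; omega
          rw [hIoc, Finset.sum_singleton]
          have hb : b = n - 1 := by omega
          have hb1 : b + 1 = n := by omega
          rw [hb1]
          have : fqq W w η n n P - fqq W w η n n (y n)
              = W * (w n * (Real.logb 2 (P + η n) - Real.logb 2 (y n + η n))
                - w (n - 1) * (Real.logb 2 (P + η (n - 1)) - Real.logb 2 (y n + η (n - 1)))) := by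
            simp only [fqq]; ring
          rw [this, hb]
        | succ k ihk =>
          intro b hib hbn
          have hsplit : ∑ l ∈ Finset.Ioc b n, (fqq W w η l l P - fqq W w η l l (y l))
              = (fqq W w η (b+1) (b+1) P - fqq W w η (b+1) (b+1) (y (b+1)))
                + ∑ l ∈ Finset.Ioc (b+1) n, (fqq W w η l l P - fqq W w η l l (y l)) := by
            rw [← Finset.sum_Ioc_consecutive _ (show b ≤ b+1 by omega) (show b+1 ≤ n by omega)]
            congr 1
            rw [show Finset.Ioc b (b+1) = {b+1} from by
              ext x; simp only [Finset.mem_Ioc, Finset.mem_singleton]; omega,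
              Finset.sum_singleton]
          have ih := ihk (b+1) (by omega) (by omega)
          have hkle := key_le' (w n) (w (b+1)) (η n) (η (b+1)) (y (b+2)) (y (b+1))
            hηn (hη_pos (b+1) (by omega)) (hy0 (b+2) (by omega) (by omega))
            (hychain (b+1) (by omega) (by omega))
            (fun s hs1 hs2 => hB (b+1) (by omega) (by omega) s
              (le_trans (hy0 (b+2) (by omega) (by omega)) hs1)
              (le_trans hs2 (hyleP (b+1) (by omega) (by omega))))
          have hkleW := mul_le_mul_of_nonneg_left hkle hW.le
          have hfq : fqq W w η (b+1) (b+1) P - fqq W w η (b+1) (b+1) (y (b+1))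
              = W * (w (b+1) * (Real.logb 2 (P + η (b+1)) - Real.logb 2 (y (b+1) + η (b+1)))
                - w b * (Real.logb 2 (P + η b) - Real.logb 2 (y (b+1) + η b))) := by
            simp only [fqq, Nat.add_sub_cancel]; ring
          rw [hsplit, hfq]
          ring_nf at ih hkleW ⊢
          linarith [ih, hkleW]
      -- strict positivity of the total gain
      have hyi10 : 0 ≤ y (i+1) := hy0 (i+1) (by omega) (by omega)
      have hyi1P : y (i+1) < P := hyipP hiK'
      have hstrict := key_lt' (w n) (w i) (η n) (η i) (y (i+1)) P hηn hηi hyi10 hyi1P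
        (fun s hs1 hs2 => hA s (lt_of_le_of_lt hyi10 hs1) hs2)
      have hT := hTb (n - i - 1) i le_rfl (by omega)
      -- objective difference
      have hd1 : objSC K W w η (fun l => if l ≤ n then P else y l) - objSC K W w η y
          = ∑ l ∈ Finset.Ioc 0 n, (fqq W w η l l P - fqq W w η l l (y l)) := by
        rw [objSC_split K n hnK W w η (fun l => if l ≤ n then P else y l),
          objSC_split K n hnK W w η y]
        have t1 : ∑ l ∈ Finset.Ioc n K, fqq W w η l l ((fun l => if l ≤ n then P else y l) l)
            = ∑ l ∈ Finset.Ioc n K, fqq W w η l l (y l) :=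
          Finset.sum_congr rfl (fun l hl => by
            have := (Finset.mem_Ioc.1 hl).1
            dsimp only
            rw [if_neg (by omega)])
        have t2 : ∑ l ∈ Finset.Ioc 0 n, fqq W w η l l ((fun l => if l ≤ n then P else y l) l)
            = ∑ l ∈ Finset.Ioc 0 n, fqq W w η l l P :=
          Finset.sum_congr rfl (fun l hl => by
            have := (Finset.mem_Ioc.1 hl).2
            dsimp only
            rw [if_pos this])
        rw [t1, t2, Finset.sum_sub_distrib]
        ring
      have hd2 : ∑ l ∈ Finset.Ioc 0 n, (fqq W w η l l P - fqq W w η l l (y l))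
          = ∑ l ∈ Finset.Ioc 0 i, (fqq W w η l l P - fqq W w η l l (y l))
            + ∑ l ∈ Finset.Ioc i n, (fqq W w η l l P - fqq W w η l l (y l)) :=
        (Finset.sum_Ioc_consecutive _ (Nat.zero_le i) hlt.le).symm
      have hd3 : ∑ l ∈ Finset.Ioc 0 i, (fqq W w η l l P - fqq W w η l l (y l)) = 0 :=
        Finset.sum_eq_zero (fun l hl => by
          have hm := Finset.mem_Ioc.1 hl
          rw [hyl l hm.1 hm.2]; ring)
      have hBn := hBle n hlt.le hnK
      have hstrictW := mul_lt_mul_of_pos_left hstrict hW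
      ring_nf at hT hstrictW
      have : (0:ℝ) < ∑ l ∈ Finset.Ioc i n, (fqq W w η l l P - fqq W w η l l (y l)) := by
        linarith [hT, hstrictW]
      have hdiff : 0 < objSC K W w η (fun l => if l ≤ n then P else y l) - objSC K W w η y := by
        rw [hd1, hd2, hd3, zero_add]; exact this
      linarith [hBn, hdiff]
  refine ⟨hyl, ⟨⟨⟨⟨?_, ?_, ?_⟩, ?_⟩, ?_⟩, ?_⟩, ?_⟩
  · simp only [if_pos hi1]; exact le_rfl
  · intro l hl1 hlK
    by_cases h1 : l + 1 ≤ i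
    · simp only [if_pos h1, if_pos (by omega : l ≤ i)]; exact le_rfl
    · by_cases h2 : l ≤ i
      · simp only [if_neg h1, if_pos h2]
        exact le_trans (hyleP (l + 1) (by omega) (by omega)) hPle
      · simp only [if_neg h1, if_neg h2]
        exact hychain l (by omega) hlK
  · by_cases h : K ≤ i
    · simp only [if_pos h]; exact hPmax.le
    · simp only [if_neg h]; exact hyK
  · simp only [activeCount] at hyact ⊢
    have hset : {l : ℕ | 1 ≤ l ∧ l ≤ K ∧ (if l = K then 0 else (fun l => if l ≤ i then Pmax else y l) (l + 1)) < (fun l => if l ≤ i then Pmax else y l) l}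
        = {l : ℕ | 1 ≤ l ∧ l ≤ K ∧ (if l = K then 0 else y (l + 1)) < y l} := by
      ext l
      simp only [Set.mem_setOf_eq]
      constructor
      · rintro ⟨a, b, c⟩
        refine ⟨a, b, ?_⟩
        rcases lt_trichotomy l i with h1 | h1 | h1
        · exfalso
          have hlK : l ≠ K := by omega
          rw [if_neg hlK, if_pos (by omega : l + 1 ≤ i), if_pos (by omega : l ≤ i)] at c
          exact lt_irrefl _ c
        · by_cases hlK : l = K
          · rw [if_pos hlK] at c ⊢
            rw [hyl l (by omega) (by omega)]
            exact hP
          · rw [if_neg hlK] at c ⊢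
            rw [hyl l (by omega) (by omega)]
            have hl1 : l + 1 = i + 1 := by omega
            rw [hl1]
            exact hyipP (by omega)
        · by_cases hlK : l = K
          · rw [if_pos hlK] at c ⊢
            rwa [if_neg (by omega : ¬ l ≤ i)] at c
          · rw [if_neg hlK] at c ⊢
            rwa [if_neg (by omega : ¬ l + 1 ≤ i), if_neg (by omega : ¬ l ≤ i)] at c
      · rintro ⟨a, b, c⟩
        refine ⟨a, b, ?_⟩
        rcases lt_trichotomy l i with h1 | h1 | h1
        · exfalso
          have hlK : l ≠ K := by omega
          rw [if_neg hlK, hyl (l+1) (by omega) (by omega), hyl l (by omega) (by omega)] at c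
          exact lt_irrefl _ c
        · by_cases hlK : l = K
          · rw [if_pos hlK] at c ⊢
            rw [if_pos (by omega : l ≤ i)]
            exact hPmax
          · rw [if_neg hlK] at c ⊢
            rw [if_neg (by omega : ¬ l + 1 ≤ i), if_pos (by omega : l ≤ i)]
            have hl1 : l + 1 = i + 1 := by omega
            rw [hl1]
            exact lt_of_lt_of_le (hyipP (by omega)) hPle
        · by_cases hlK : l = K
          · rw [if_pos hlK] at c ⊢
            rwa [if_neg (by omega : ¬ l ≤ i)]
          · rw [if_neg hlK] at c ⊢
            rwa [if_neg (by omega : ¬ l + 1 ≤ i), if_neg (by omega : ¬ l ≤ i)]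
    rw [hset]
    exact hyact
  · intro l h1 h2
    simp only [if_pos h2, if_pos hi1]
  · -- maximality over the block-constrained Pmax problem
    rintro z ⟨⟨hzc, hzact⟩, hzconst⟩
    have hzmono := chain_mono hzc
    have hz0 := chain_nonneg hzc
    -- objSC x = objSC y + Δ
    have hxy : objSC K W w η (fun l => if l ≤ i then Pmax else y l) - objSC K W w η y
        = W * (w i * (Real.logb 2 (Pmax + η i) - Real.logb 2 (P + η i))) := by
      rw [objSC_split K i hiK W w η (fun l => if l ≤ i then Pmax else y l),
        objSC_split K i hiK W w η y]
      have t1 : ∑ l ∈ Finset.Ioc i K, fqq W w η l l ((fun l => if l ≤ i then Pmax else y l) l)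
          = ∑ l ∈ Finset.Ioc i K, fqq W w η l l (y l) :=
        Finset.sum_congr rfl (fun l hl => by
          have := (Finset.mem_Ioc.1 hl).1; dsimp only; rw [if_neg (by omega)])
      have t2 : ∑ l ∈ Finset.Ioc 0 i, fqq W w η l l ((fun l => if l ≤ i then Pmax else y l) l)
          = ∑ l ∈ Finset.Ioc 0 i, fqq W w η l l Pmax :=
        Finset.sum_congr rfl (fun l hl => by
          have := (Finset.mem_Ioc.1 hl).2; dsimp only; rw [if_pos this])
      have t3 : ∑ l ∈ Finset.Ioc 0 i, fqq W w η l l (y l)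
          = ∑ l ∈ Finset.Ioc 0 i, fqq W w η l l P :=
        Finset.sum_congr rfl (fun l hl => by
          have hm := Finset.mem_Ioc.1 hl; rw [hyl l hm.1 hm.2])
      rw [t1, t2, t3, sum_fqq_Ioc W w η 0 Pmax i (Nat.zero_le i),
        sum_fqq_Ioc W w η 0 P i (Nat.zero_le i), hw0]
      ring
    have hΔ : 0 ≤ W * (w i * (Real.logb 2 (Pmax + η i) - Real.logb 2 (P + η i))) := by
      have : Real.logb 2 (P + η i) ≤ Real.logb 2 (Pmax + η i) :=
        (Real.logb_le_logb one_lt_two (by linarith) (by linarith)).2 (by linarith)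
      exact mul_nonneg hW.le (mul_nonneg hwi.le (by linarith))
    rcases le_or_gt (z 1) P with hc | hc
    · -- z is feasible for budget P
      have hzP : z ∈ sicSet K M P := ⟨⟨hc, hzc.2.1, hzc.2.2⟩, hzact⟩
      have := hymax z hzP
      linarith
    · -- head of z exceeds P
      set m := Nat.findGreatest (fun l => 1 ≤ l ∧ P < z l) K with hm
      have hm1 := Nat.findGreatest_spec (P := fun l => 1 ≤ l ∧ P < z l) (m := 1) (n := K) hK ⟨le_rfl, hc⟩
      obtain ⟨hm1a, hm1b⟩ := hm1
      have hmK : m ≤ K := Nat.findGreatest_le K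
      have him : i ≤ m := by
        by_contra hmi
        have := Nat.findGreatest_is_greatest (by omega : m < i) hiK
        rw [hzconst i hi1 le_rfl] at this
        exact this ⟨hi1, hc⟩
      have hzgtP : ∀ l, 1 ≤ l → l ≤ m → P < z l :=
        fun l h1 h2 => lt_of_lt_of_le hm1b (hzmono l m h1 h2 hmK)
      have hzleP : ∀ l, m < l → l ≤ K → z l ≤ P := by
        intro l h1 h2
        by_contra hgt
        exact Nat.findGreatest_is_greatest h1 h2 ⟨by omega, by linarith⟩
      -- truncated competitor
      have hztfeas : (fun l => min (z l) P) ∈ sicSet K M P := by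
        refine ⟨⟨min_le_right _ _, ?_, ?_⟩, ?_⟩
        · exact fun l h1 h2 => min_le_min (hzc.2.1 l h1 h2) le_rfl
        · exact le_min (hzc.2.2) hP.le
        · refine le_trans (Set.ncard_le_ncard ?_ (active_finite K z)) hzact
          intro l ⟨a, b, c⟩
          refine ⟨a, b, ?_⟩
          by_cases hlK : l = K
          · rw [if_pos hlK] at c ⊢
            exact lt_of_lt_of_le c (min_le_left _ _)
          · rw [if_neg hlK] at c ⊢
            by_contra hle
            push_neg at hle
            have : min (z l) P ≤ min (z (l+1)) P := min_le_min hle le_rfl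
            exact absurd c (not_lt.2 this)
      have hzt := hymax _ hztfeas
      -- downward induction: tail-above-P loss is nonpositive
      have hSb : ∀ k b, i ≤ b → b ≤ m → m - b = k →
          ∑ l ∈ Finset.Ioc b m, (fqq W w η l l (z l) - fqq W w η l l P)
            ≤ W * (w i * (Real.logb 2 ((if b < m then z (b+1) else P) + η i) - Real.logb 2 (P + η i))
               - w b * (Real.logb 2 ((if b < m then z (b+1) else P) + η b) - Real.logb 2 (P + η b))) := by
        intro k
        induction k with
        | zero =>
          intro b hib hbm hk
          obtain rfl : b = m := by omega
          rw [Finset.Ioc_self, Finset.sum_empty, if_neg (lt_irrefl m)]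
          have h0 : W * (w i * (Real.logb 2 (P + η i) - Real.logb 2 (P + η i))
              - w m * (Real.logb 2 (P + η m) - Real.logb 2 (P + η m))) = 0 := by ring
          linarith [h0]
        | succ k ihk =>
          intro b hib hbm hk
          have hbm' : b < m := by omega
          have hsplit : ∑ l ∈ Finset.Ioc b m, (fqq W w η l l (z l) - fqq W w η l l P)
              = (fqq W w η (b+1) (b+1) (z (b+1)) - fqq W w η (b+1) (b+1) P)
                + ∑ l ∈ Finset.Ioc (b+1) m, (fqq W w η l l (z l) - fqq W w η l l P) := by
            rw [← Finset.sum_Ioc_consecutive _ (show b ≤ b+1 by omega) (show b+1 ≤ m by omega)]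
            congr 1
            rw [show Finset.Ioc b (b+1) = {b+1} from by
              ext x; simp only [Finset.mem_Ioc, Finset.mem_singleton]; omega,
              Finset.sum_singleton]
          have ih := ihk (b+1) (by omega) (by omega) (by omega)
          -- interval [g(b+1), z(b+1)] ⊆ [P, ∞)
          set a : ℝ := if b + 1 < m then z (b+1+1) else P with ha
          have haP : P ≤ a := by
            rw [ha]; split
            · exact (hzgtP (b+1+1) (by omega) (by omega)).le
            · exact le_rfl
          have hazb : a ≤ z (b+1) := by
            rw [ha]; split
            · exact hzc.2.1 (b+1) (by omega) (by omega)
            · exact (hzgtP (b+1) (by omega) (by omega)).le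
          have hkle := key_le' (w i) (w (b+1)) (η i) (η (b+1)) a (z (b+1))
            hηi (hη_pos (b+1) (by omega)) (by linarith) hazb
            (fun s hs1 hs2 => hstar (b+1) (by omega) (by omega) s (le_trans haP hs1))
          have hkleW := mul_le_mul_of_nonneg_left hkle hW.le
          have hfq : fqq W w η (b+1) (b+1) (z (b+1)) - fqq W w η (b+1) (b+1) P
              = W * (w (b+1) * (Real.logb 2 (z (b+1) + η (b+1)) - Real.logb 2 (P + η (b+1)))
                - w b * (Real.logb 2 (z (b+1) + η b) - Real.logb 2 (P + η b))) := by
            simp only [fqq, Nat.add_sub_cancel]; ring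
          rw [hsplit, hfq, if_pos hbm']
          ring_nf at ih hkleW ⊢
          linarith [ih, hkleW]
      have hS := hSb (m - i) i le_rfl him rfl
      -- head-sum identity
      have hhead : ∑ l ∈ Finset.Ioc 0 i, (fqq W w η l l (z l) - fqq W w η l l P)
          = W * (w i * (Real.logb 2 (z 1 + η i) - Real.logb 2 (P + η i))) := by
        have t4 : ∑ l ∈ Finset.Ioc 0 i, fqq W w η l l (z l)
            = ∑ l ∈ Finset.Ioc 0 i, fqq W w η l l (z 1) :=
          Finset.sum_congr rfl (fun l hl => by
            have hm' := Finset.mem_Ioc.1 hl; rw [hzconst l hm'.1 hm'.2])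
        rw [Finset.sum_sub_distrib, t4, sum_fqq_Ioc W w η 0 (z 1) i (Nat.zero_le i),
          sum_fqq_Ioc W w η 0 P i (Nat.zero_le i), hw0]
        ring
      -- objSC z - objSC z̃ = head + tail pieces
      have hdiff : objSC K W w η z - objSC K W w η (fun l => min (z l) P)
          = ∑ l ∈ Finset.Ioc 0 i, (fqq W w η l l (z l) - fqq W w η l l P)
            + ∑ l ∈ Finset.Ioc i m, (fqq W w η l l (z l) - fqq W w η l l P) := by
        rw [objSC_split K m hmK W w η z, objSC_split K m hmK W w η (fun l => min (z l) P)]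
        have t5 : ∑ l ∈ Finset.Ioc m K, fqq W w η l l ((fun l => min (z l) P) l)
            = ∑ l ∈ Finset.Ioc m K, fqq W w η l l (z l) :=
          Finset.sum_congr rfl (fun l hl => by
            have hm' := Finset.mem_Ioc.1 hl
            dsimp only
            rw [min_eq_left (hzleP l hm'.1 hm'.2)])
        have t6 : ∑ l ∈ Finset.Ioc 0 m, fqq W w η l l ((fun l => min (z l) P) l)
            = ∑ l ∈ Finset.Ioc 0 m, fqq W w η l l P :=
          Finset.sum_congr rfl (fun l hl => by
            have hm' := Finset.mem_Ioc.1 hl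
            dsimp only
            rw [min_eq_right (hzgtP l hm'.1 hm'.2).le])
        rw [t5, t6]
        have t7 : ∑ l ∈ Finset.Ioc 0 m, fqq W w η l l (z l) - ∑ l ∈ Finset.Ioc 0 m, fqq W w η l l P
            = ∑ l ∈ Finset.Ioc 0 m, (fqq W w η l l (z l) - fqq W w η l l P) :=
          (Finset.sum_sub_distrib _ _).symm
        have t8 : ∑ l ∈ Finset.Ioc 0 m, (fqq W w η l l (z l) - fqq W w η l l P)
            = ∑ l ∈ Finset.Ioc 0 i, (fqq W w η l l (z l) - fqq W w η l l P)
              + ∑ l ∈ Finset.Ioc i m, (fqq W w η l l (z l) - fqq W w η l l P) :=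
          (Finset.sum_Ioc_consecutive _ (Nat.zero_le i) him).symm
        rw [← t8, ← t7]
        ring
      -- the bound on hS's RHS is 0
      have hS0 : ∑ l ∈ Finset.Ioc i m, (fqq W w η l l (z l) - fqq W w η l l P) ≤ 0 := by
        refine le_trans hS (le_of_eq ?_)
        ring
      -- z 1 ≤ Pmax
      have hz1 : z 1 ≤ Pmax := hzc.1
      have hz1log : Real.logb 2 (z 1 + η i) ≤ Real.logb 2 (Pmax + η i) :=
        (Real.logb_le_logb one_lt_two (by linarith) (by linarith)).2 (by linarith)
      have hheadle : ∑ l ∈ Finset.Ioc 0 i, (fqq W w η l l (z l) - fqq W w η l l P)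
          ≤ W * (w i * (Real.logb 2 (Pmax + η i) - Real.logb 2 (P + η i))) := by
        rw [hhead]
        have hh := mul_le_mul_of_nonneg_left hz1log (mul_pos hW hwi).le
        ring_nf at hh ⊢
        linarith [hh]
      linarith [hzt, hdiff, hS0, hheadle, hxy]
  · intro l h1 h2
    by_cases h : l ≤ i
    · rw [if_pos h, hyl l h1 h]
      exact (min_eq_right hPle).symm
    · rw [if_neg h]
      exact (min_eq_left (hyleP l h1 h2)).symm
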